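/- Let A and B be Banach algebras and T ∈ hom(B, A). If (Φ,Ψ) lies in the left topological center Z_t^{(ℓ)}((A ×_T B)''), then Φ + T''(Ψ) ∈ Z_t^{(ℓ)}(A'') and Ψ ∈ Z_t^{(ℓ)}(B''). -/

import Mathlib

set_option linter.unusedSectionVars false


open ContinuousLinearMap NormedSpace

variable {A B : Type*}
  [NonUnitalNormedRing A] [NormedSpace ℂ A] [IsScalarTower ℂ A A] [SMulCommClass ℂ A A]
  [CompleteSpace A]
  [NonUnitalNormedRing B] [NormedSpace ℂ B] [IsScalarTower ℂ B B] [SMulCommClass ℂ B B]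
  [CompleteSpace B]

/-- The morphism-product multiplication on `A × B`:
`(a₁,b₁)·(a₂,b₂) = (a₁a₂ + a₁T(b₂) + T(b₁)a₂, b₁b₂)`. -/
noncomputable def tMul (T : B →L[ℂ] A) (u v : A × B) : A × B :=
  (u.1 * v.1 + u.1 * T v.2 + T u.2 * v.1, u.2 * v.2)

/-- The ℓ¹ norm `‖(a,b)‖ = ‖a‖ + ‖b‖` on `A × B`. -/
noncomputable def tNorm (u : A × B) : ℝ := ‖u.1‖ + ‖u.2‖

/-- Auxiliary map: for `Φ` in the second dual of `E` and a bundled bilinear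
multiplication `M` on `E`, this is `f ↦ (a ↦ Φ (f ∘ M a))`, i.e. `f ↦ Φ · f`. -/
noncomputable def rAct {E : Type*} [NormedAddCommGroup E] [NormedSpace ℂ E]
    (M : E →L[ℂ] E →L[ℂ] E) (Φ : StrongDual ℂ (StrongDual ℂ E)) : StrongDual ℂ E →L[ℂ] StrongDual ℂ E :=
  (compL ℂ E (StrongDual ℂ E) ℂ Φ).comp
    (((compL ℂ E (E →L[ℂ] E) (StrongDual ℂ E)).flip M).comp (compL ℂ E E ℂ))

/-- The first Arens product `Φ □ Ψ` on the second dual of `E`, where the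
multiplication of `E` is given by the bundled bilinear map `M`:
`⟨Φ□Ψ, f⟩ = ⟨Φ, Ψ·f⟩` with `(Ψ·f)(a) = Ψ(f·a)` and `(f·a)(x) = f(ax)`. -/
noncomputable def arens1 {E : Type*} [NormedAddCommGroup E] [NormedSpace ℂ E]
    (M : E →L[ℂ] E →L[ℂ] E) (Φ Ψ : StrongDual ℂ (StrongDual ℂ E)) : StrongDual ℂ (StrongDual ℂ E) :=
  Φ.comp (rAct M Ψ)

/-- The second Arens product `Φ ◊ Ψ` on the second dual of `E`:
`⟨Φ◊Ψ, f⟩ = ⟨Ψ, f·Φ⟩` with `(f·Φ)(a) = Φ(a·f)` and `(a·f)(x) = f(xa)`. -/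
noncomputable def arens2 {E : Type*} [NormedAddCommGroup E] [NormedSpace ℂ E]
    (M : E →L[ℂ] E →L[ℂ] E) (Φ Ψ : StrongDual ℂ (StrongDual ℂ E)) : StrongDual ℂ (StrongDual ℂ E) :=
  Ψ.comp (rAct M.flip Φ)

/-- Bundled bilinear map `(u,v) ↦ M (f u) (g v)`. -/
noncomputable def bcomp {P E : Type*} [NormedAddCommGroup P] [NormedSpace ℂ P]
    [NormedAddCommGroup E] [NormedSpace ℂ E]
    (M : E →L[ℂ] E →L[ℂ] E) (f g : P →L[ℂ] E) : P →L[ℂ] P →L[ℂ] E :=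
  ((compL ℂ P E E).flip g).comp (M.comp f)

/-- The morphism-product multiplication `tMul T`, as a bundled bilinear map;
`tMulCLM T u v = tMul T u v`. -/
noncomputable def tMulCLM (T : B →L[ℂ] A) : (A × B) →L[ℂ] (A × B) →L[ℂ] (A × B) :=
  ((compL ℂ (A × B) A (A × B) (inl ℂ A B)).comp
    (bcomp (mul ℂ A) (fst ℂ A B) (fst ℂ A B + T.comp (snd ℂ A B)) +
     bcomp (mul ℂ A) (T.comp (snd ℂ A B)) (fst ℂ A B))) +
  ((compL ℂ (A × B) B (A × B) (inr ℂ A B)).comp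
    (bcomp (mul ℂ B) (snd ℂ A B) (snd ℂ A B)))

/-- The adjoint `T' : A' → B'`, `T'(f) = f ∘ T`. -/
noncomputable def dualT (T : B →L[ℂ] A) : StrongDual ℂ A →L[ℂ] StrongDual ℂ B := (compL ℂ B A ℂ).flip T

/-- The double adjoint `T'' : B'' → A''`, `T''(F) = F ∘ T'`. -/
noncomputable def ddT (T : B →L[ℂ] A) : StrongDual ℂ (StrongDual ℂ B) →L[ℂ] StrongDual ℂ (StrongDual ℂ A) :=
  (compL ℂ (StrongDual ℂ A) (StrongDual ℂ B) ℂ).flip (dualT T)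

/-- The identification `Θ : A'' × B'' → (A × B)''`, `Θ(Φ,Ψ)(F) = Φ(F∘inl) + Ψ(F∘inr)`,
i.e. `Θ(Φ,Ψ)(f,g) = Φ(f) + Ψ(g)` under the identification `(A × B)' ≅ A' × B'`. -/
noncomputable def Theta (Φ : StrongDual ℂ (StrongDual ℂ A)) (Ψ : StrongDual ℂ (StrongDual ℂ B)) :
    StrongDual ℂ (StrongDual ℂ (A × B)) :=
  Φ.comp ((compL ℂ A (A × B) ℂ).flip (inl ℂ A B)) +
  Ψ.comp ((compL ℂ B (A × B) ℂ).flip (inr ℂ A B))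

/-- The functional `(a,b) ↦ φ(a) + φ(T(b))` on `A × B`, for `φ : A → ℂ`. -/
noncomputable def charExt (T : B →L[ℂ] A) (φ : A →L[ℂ] ℂ) : (A × B) →L[ℂ] ℂ :=
  φ.comp (fst ℂ A B) + (φ.comp T).comp (snd ℂ A B)

/-- The functional `(a,b) ↦ ψ(b)` on `A × B`, for `ψ : B → ℂ`. -/
noncomputable def charSnd (ψ : B →L[ℂ] ℂ) : (A × B) →L[ℂ] ℂ :=
  ψ.comp (snd ℂ A B)


section Helpers

lemma rAct_apply {E : Type*} [NormedAddCommGroup E] [NormedSpace ℂ E]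
    (M : E →L[ℂ] E →L[ℂ] E) (Φ : StrongDual ℂ (StrongDual ℂ E)) (f : StrongDual ℂ E) (a : E) :
    rAct M Φ f a = Φ (f.comp (M a)) := by simp [rAct]

lemma tMulCLM_apply (T : B →L[ℂ] A) (u v : A × B) :
    tMulCLM T u v = (u.1 * v.1 + u.1 * T v.2 + T u.2 * v.1, u.2 * v.2) := by
  simp [tMulCLM, bcomp, mul_add]

lemma Theta_apply (Φ : StrongDual ℂ (StrongDual ℂ A)) (Ψ : StrongDual ℂ (StrongDual ℂ B))
    (F : StrongDual ℂ (A × B)) :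
    Theta Φ Ψ F = Φ (F.comp (inl ℂ A B)) + Ψ (F.comp (inr ℂ A B)) := by
  simp [Theta]

lemma ddT_apply (T : B →L[ℂ] A) (Ψ : StrongDual ℂ (StrongDual ℂ B)) (g : StrongDual ℂ A) :
    ddT T Ψ g = Ψ (g.comp T) := by simp [ddT, dualT]

variable (T : B →L[ℂ] A)

lemma keyA1 (hT : ∀ x y, T (x * y) = T x * T y) (Φ Φ' : StrongDual ℂ (StrongDual ℂ A)) (Ψ : StrongDual ℂ (StrongDual ℂ B)) (f : StrongDual ℂ A) :
    arens1 (tMulCLM T) (Theta Φ Ψ) (Theta Φ' 0) (charExt T f)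
      = arens1 (mul ℂ A) (Φ + ddT T Ψ) Φ' f := by
  have c1 : ((rAct (tMulCLM T) (Theta Φ' 0) (charExt T f)).comp (inl ℂ A B))
      = rAct (mul ℂ A) Φ' f := by
    ext a
    simp only [comp_apply, inl_apply, rAct_apply, Theta_apply, map_zero, add_zero,
      zero_apply]
    congr 1
    ext x
    simp [tMulCLM_apply, charExt, hT]
  have c2 : ((rAct (tMulCLM T) (Theta Φ' 0) (charExt T f)).comp (inr ℂ A B))
      = (rAct (mul ℂ A) Φ' f).comp T := by
    ext b
    simp only [comp_apply, inr_apply, rAct_apply, Theta_apply, map_zero, add_zero,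
      zero_apply]
    congr 1
    ext x
    simp [tMulCLM_apply, charExt, hT]
  simp only [arens1, comp_apply, Theta_apply, c1, c2, add_apply, ddT_apply]

lemma keyA2 (hT : ∀ x y, T (x * y) = T x * T y) (Φ Φ' : StrongDual ℂ (StrongDual ℂ A)) (Ψ : StrongDual ℂ (StrongDual ℂ B)) (f : StrongDual ℂ A) :
    arens2 (tMulCLM T) (Theta Φ Ψ) (Theta Φ' 0) (charExt T f)
      = arens2 (mul ℂ A) (Φ + ddT T Ψ) Φ' f := by
  have c1 : ((rAct (tMulCLM T).flip (Theta Φ Ψ) (charExt T f)).comp (inl ℂ A B))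
      = rAct (mul ℂ A).flip (Φ + ddT T Ψ) f := by
    ext a
    simp only [comp_apply, inl_apply, rAct_apply, Theta_apply, add_apply, ddT_apply]
    congr 2
    · ext x
      simp [flip_apply, tMulCLM_apply, charExt, hT]
    · ext y
      simp [flip_apply, tMulCLM_apply, charExt, hT]
  simp only [arens2, comp_apply, Theta_apply, map_zero, add_zero, zero_apply, c1]

lemma keyB1 (Φ : StrongDual ℂ (StrongDual ℂ A)) (Ψ Ψ' : StrongDual ℂ (StrongDual ℂ B)) (g : StrongDual ℂ B) :
    arens1 (tMulCLM T) (Theta Φ Ψ) (Theta 0 Ψ') (charSnd g)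
      = arens1 (mul ℂ B) Ψ Ψ' g := by
  have c1 : ((rAct (tMulCLM T) (Theta 0 Ψ') (charSnd g : StrongDual ℂ (A × B))).comp (inl ℂ A B))
      = 0 := by
    ext a
    simp only [comp_apply, inl_apply, rAct_apply, Theta_apply, zero_apply,
      ContinuousLinearMap.zero_apply, zero_add]
    convert map_zero Ψ' using 2
    ext y
    simp [tMulCLM_apply, charSnd]
  have c2 : ((rAct (tMulCLM T) (Theta 0 Ψ') (charSnd g : StrongDual ℂ (A × B))).comp (inr ℂ A B))
      = rAct (mul ℂ B) Ψ' g := by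
    ext b
    simp only [comp_apply, inr_apply, rAct_apply, Theta_apply, zero_apply,
      ContinuousLinearMap.zero_apply, zero_add]
    congr 1
    ext y
    simp [tMulCLM_apply, charSnd]
  simp only [arens1, comp_apply, Theta_apply, c1, c2, map_zero, zero_add]

lemma keyB2 (Φ : StrongDual ℂ (StrongDual ℂ A)) (Ψ Ψ' : StrongDual ℂ (StrongDual ℂ B)) (g : StrongDual ℂ B) :
    arens2 (tMulCLM T) (Theta Φ Ψ) (Theta 0 Ψ') (charSnd g)
      = arens2 (mul ℂ B) Ψ Ψ' g := by
  have c2 : ((rAct (tMulCLM T).flip (Theta Φ Ψ) (charSnd g : StrongDual ℂ (A × B))).comp (inr ℂ A B))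
      = rAct (mul ℂ B).flip Ψ g := by
    ext b
    simp only [comp_apply, inr_apply, rAct_apply, Theta_apply]
    have z : ((charSnd g : StrongDual ℂ (A × B)).comp ((tMulCLM T).flip ((0 : A), b))).comp (inl ℂ A B) = 0 := by
      ext x
      simp [flip_apply, tMulCLM_apply, charSnd]
    rw [z, map_zero, zero_add]
    congr 1
    ext y
    simp [flip_apply, tMulCLM_apply, charSnd]
  simp only [arens2, comp_apply, Theta_apply, map_zero, zero_add,
    ContinuousLinearMap.zero_apply, c2]

end Helpers

/-- if `(Φ,Ψ)` lies in the left topological center of `(A ×_T B)''`,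
then `Φ + T''(Ψ)` lies in the left topological center of `A''` and `Ψ` in that of `B''`. -/
theorem left_topological_center_necessary
    (T : B →L[ℂ] A) (hT : ∀ x y, T (x * y) = T x * T y) (hTn : ‖T‖ ≤ 1)
    (Φ : StrongDual ℂ (StrongDual ℂ A)) (Ψ : StrongDual ℂ (StrongDual ℂ B))
    (h : ∀ X : StrongDual ℂ (StrongDual ℂ (A × B)),
      arens1 (tMulCLM T) (Theta Φ Ψ) X = arens2 (tMulCLM T) (Theta Φ Ψ) X) :
    (∀ Φ' : StrongDual ℂ (StrongDual ℂ A),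
      arens1 (mul ℂ A) (Φ + ddT T Ψ) Φ' = arens2 (mul ℂ A) (Φ + ddT T Ψ) Φ') ∧
    (∀ Ψ' : StrongDual ℂ (StrongDual ℂ B),
      arens1 (mul ℂ B) Ψ Ψ' = arens2 (mul ℂ B) Ψ Ψ') := by
  constructor
  · intro Φ'
    ext f
    have hh := congrArg (fun X : StrongDual ℂ (StrongDual ℂ (A × B)) => X (charExt T f)) (h (Theta Φ' 0))
    simpa [keyA1 T hT, keyA2 T hT] using hh
  · intro Ψ'
    ext g
    have hh := congrArg (fun X : StrongDual ℂ (StrongDual ℂ (A × B)) => X (charSnd g)) (h (Theta 0 Ψ'))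
    simpa [keyB1 T, keyB2 T] using hh
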